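/- For each n ∈ ℕ let (Ωₙ, Pₙ) be a probability space carrying random vectors θ̄₁ₙ, θ̄₂ₙ : Ωₙ → ℝ^d and random d×d matrices Σ̄₁ₙ, Σ̄₂ₙ, H̄ₙ, and define the random pooling weight ω̃ₙ := tr(H̄ₙΣ̄₁ₙ) / ( (θ̄₁ₙ − θ̄₂ₙ)ᵀ H̄ₙ (θ̄₁ₙ − θ̄₂ₙ) + tr(H̄ₙΣ̄₁ₙ) + tr(H̄ₙΣ̄₂ₙ) ). Assume: (i) θ̄₁ₙ → θ₀ in probability and θ̄₂ₙ → θ* in probability, i.e. for every ε > 0, Pₙ(‖θ̄₁ₙ − θ₀‖ > ε) → 0 and Pₙ(‖θ̄₂ₙ − θ*‖ > ε) → 0; (ii) the rescaled covariance estimates n·Σ̄₁ₙ and n·Σ̄₂ₙ converge in probability (entrywise) to fixed matrices Σ₁ and Σ₂; (iii) H̄ₙ converges in probability (entrywise) to a fixed symmetric matrix H₀ with (θ* − θ₀)ᵀH₀(θ* − θ₀) > 0. Then ω̃ₙ → 0 in probability: for every ε > 0, Pₙ(|ω̃ₙ| > ε) → 0 as n → ∞. -/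

import Mathlib

open MeasureTheory Matrix Filter

section Aux

variable {Ω : ℕ → Type*} [∀ n, MeasurableSpace (Ω n)] {P : ∀ n, Measure (Ω n)}

/-- Convergence in probability to a constant, on varying probability spaces. -/
def TPc (P : ∀ n, Measure (Ω n)) (X : ∀ n, Ω n → ℝ) (c : ℝ) : Prop :=
  ∀ ε : ℝ, 0 < ε → Tendsto (fun n => P n {a | ε < |X n a - c|}) atTop (nhds 0)

lemma tpc_congr' {X Y : ∀ n, Ω n → ℝ} {c : ℝ}
    (h : ∀ᶠ n in atTop, ∀ a, X n a = Y n a) (hX : TPc P X c) : TPc P Y c := by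
  intro ε hε
  refine Filter.Tendsto.congr' ?_ (hX ε hε)
  filter_upwards [h] with n hn
  congr 1
  ext a
  simp [hn a]

lemma tpc_congr {X Y : ∀ n, Ω n → ℝ} {c : ℝ}
    (h : ∀ n a, X n a = Y n a) (hX : TPc P X c) : TPc P Y c :=
  tpc_congr' (Eventually.of_forall h) hX

lemma tpc_of_eq {X : ∀ n, Ω n → ℝ} {c c' : ℝ} (hX : TPc P X c) (hc : c = c') :
    TPc P X c' := hc ▸ hX

lemma tpc_pair {X Y Z : ∀ n, Ω n → ℝ} {cX cY cZ : ℝ}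
    (hX : TPc P X cX) (hY : TPc P Y cY)
    (h : ∀ ε : ℝ, 0 < ε → ∃ δ : ℝ, 0 < δ ∧
      ∀ n a, |X n a - cX| ≤ δ → |Y n a - cY| ≤ δ → |Z n a - cZ| ≤ ε) :
    TPc P Z cZ := by
  intro ε hε
  obtain ⟨δ, hδ, hd⟩ := h ε hε
  have hsub : ∀ n, {a | ε < |Z n a - cZ|} ⊆
      {a | δ < |X n a - cX|} ∪ {a | δ < |Y n a - cY|} := by
    intro n a ha
    by_contra hc
    simp only [Set.mem_union, Set.mem_setOf_eq, not_or, not_lt] at hc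
    exact absurd (hd n a hc.1 hc.2) (not_le.2 ha)
  have hle : ∀ n, P n {a | ε < |Z n a - cZ|} ≤
      P n {a | δ < |X n a - cX|} + P n {a | δ < |Y n a - cY|} :=
    fun n => (measure_mono (hsub n)).trans (measure_union_le _ _)
  have hlim : Tendsto (fun n => P n {a | δ < |X n a - cX|} + P n {a | δ < |Y n a - cY|})
      atTop (nhds 0) := by
    simpa using (hX δ hδ).add (hY δ hδ)
  exact tendsto_of_tendsto_of_tendsto_of_le_of_le tendsto_const_nhds hlim
    (fun n => zero_le) hle

lemma tpc_det {x : ℕ → ℝ} {c : ℝ} (h : Tendsto x atTop (nhds c)) :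
    TPc P (fun n (_ : Ω n) => x n) c := by
  intro ε hε
  have h3 : Tendsto (fun n => |x n - c|) atTop (nhds 0) := by
    have := (h.sub (tendsto_const_nhds (x := c))).abs
    simpa using this
  have h2 : ∀ᶠ n in atTop, |x n - c| < ε := h3.eventually_lt_const hε
  refine Filter.Tendsto.congr' ?_ tendsto_const_nhds
  filter_upwards [h2] with n hn
  have he : {a : Ω n | ε < |x n - c|} = ∅ := by
    ext a
    simp only [Set.mem_setOf_eq, Set.mem_empty_iff_false, iff_false, not_lt]
    exact hn.le
  simp [he]

lemma tpc_const (c : ℝ) : TPc P (fun n (_ : Ω n) => c) c :=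
  tpc_det tendsto_const_nhds

lemma tpc_add {X Y : ∀ n, Ω n → ℝ} {cX cY : ℝ}
    (hX : TPc P X cX) (hY : TPc P Y cY) :
    TPc P (fun n a => X n a + Y n a) (cX + cY) := by
  refine tpc_pair hX hY ?_
  intro ε hε
  refine ⟨ε / 2, by positivity, fun n a hx hy => ?_⟩
  have key : X n a + Y n a - (cX + cY) = (X n a - cX) + (Y n a - cY) := by ring
  rw [key]
  calc |(X n a - cX) + (Y n a - cY)| ≤ |X n a - cX| + |Y n a - cY| := abs_add_le _ _
    _ ≤ ε := by linarith

lemma tpc_neg {X : ∀ n, Ω n → ℝ} {c : ℝ} (hX : TPc P X c) :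
    TPc P (fun n a => -X n a) (-c) := by
  intro ε hε
  refine Filter.Tendsto.congr (fun n => ?_) (hX ε hε)
  congr 1
  ext a
  simp only [Set.mem_setOf_eq]
  rw [show -X n a - -c = -(X n a - c) from by ring, abs_neg]

lemma tpc_mul {X Y : ∀ n, Ω n → ℝ} {cX cY : ℝ}
    (hX : TPc P X cX) (hY : TPc P Y cY) :
    TPc P (fun n a => X n a * Y n a) (cX * cY) := by
  refine tpc_pair hX hY ?_
  intro ε hε
  have hden : (0:ℝ) < |cX| + |cY| + 1 := by positivity
  refine ⟨min 1 (ε / (|cX| + |cY| + 1)), lt_min one_pos (by positivity), fun n a hx hy => ?_⟩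
  set δ := min 1 (ε / (|cX| + |cY| + 1)) with hδdef
  have hδpos : 0 < δ := lt_min one_pos (by positivity)
  have hδ1 : δ ≤ 1 := min_le_left _ _
  have hδ2 : δ * (|cX| + |cY| + 1) ≤ ε := by
    rw [← le_div_iff₀ hden]
    exact min_le_right _ _
  have key : X n a * Y n a - cX * cY =
      (X n a - cX) * (Y n a - cY) + cX * (Y n a - cY) + cY * (X n a - cX) := by ring
  rw [key]
  have h1 : |(X n a - cX) * (Y n a - cY) + cX * (Y n a - cY) + cY * (X n a - cX)|
      ≤ |X n a - cX| * |Y n a - cY| + |cX| * |Y n a - cY| + |cY| * |X n a - cX| := by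
    refine (abs_add_three _ _ _).trans ?_
    simp [abs_mul]
  refine h1.trans ?_
  have hx0 : (0:ℝ) ≤ |X n a - cX| := abs_nonneg _
  have hy0 : (0:ℝ) ≤ |Y n a - cY| := abs_nonneg _
  have hprod : |X n a - cX| * |Y n a - cY| ≤ δ * 1 := by
    calc |X n a - cX| * |Y n a - cY| ≤ δ * δ := mul_le_mul hx hy hy0 hδpos.le
      _ ≤ δ * 1 := by nlinarith
  have h2 : |cX| * |Y n a - cY| ≤ |cX| * δ := mul_le_mul_of_nonneg_left hy (abs_nonneg _)
  have h3 : |cY| * |X n a - cX| ≤ |cY| * δ := mul_le_mul_of_nonneg_left hx (abs_nonneg _)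
  nlinarith [abs_nonneg cX, abs_nonneg cY]

lemma tpc_div0 {X Y : ∀ n, Ω n → ℝ} {q : ℝ} (hq : 0 < q)
    (hX : TPc P X 0) (hY : TPc P Y q) :
    TPc P (fun n a => X n a / Y n a) 0 := by
  refine tpc_pair hX hY ?_
  intro ε hε
  refine ⟨min (q / 2) (ε * q / 2), lt_min (by positivity) (by positivity), fun n a hx hy => ?_⟩
  rw [sub_zero] at hx ⊢
  have h1 : |Y n a - q| ≤ q / 2 := hy.trans (min_le_left _ _)
  have h2 : q / 2 ≤ Y n a := by
    have := abs_le.1 h1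
    linarith [this.1]
  have h3 : |X n a| ≤ ε * q / 2 := hx.trans (min_le_right _ _)
  have hYpos : 0 < Y n a := lt_of_lt_of_le (by positivity) h2
  rw [abs_div, abs_of_pos hYpos, div_le_iff₀ hYpos]
  calc |X n a| ≤ ε * q / 2 := h3
    _ = ε * (q / 2) := by ring
    _ ≤ ε * Y n a := by nlinarith

lemma tpc_div_nat {X : ∀ n, Ω n → ℝ} {c : ℝ} (hX : TPc P X c) :
    TPc P (fun n a => X n a / n) 0 := by
  have hdet : TPc P (fun n (_ : Ω n) => c / n) 0 :=
    tpc_det (tendsto_const_div_atTop_nhds_zero_nat c)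
  refine tpc_pair hX hdet ?_
  intro ε hε
  refine ⟨ε / 2, by positivity, fun n a hx hy => ?_⟩
  rw [sub_zero] at hy ⊢
  rcases Nat.eq_zero_or_pos n with h0 | h1
  · subst h0
    simp
    positivity
  · have hn : (1:ℝ) ≤ (n:ℝ) := by exact_mod_cast h1
    have key : X n a / n = (X n a - c) / n + c / n := by ring
    rw [key]
    have hb : |(X n a - c) / (n:ℝ)| ≤ |X n a - c| := by
      rw [abs_div, abs_of_nonneg (Nat.cast_nonneg (α := ℝ) n)]
      exact div_le_self (abs_nonneg _) hn
    calc |(X n a - c) / n + c / n| ≤ |(X n a - c) / (n:ℝ)| + |c / (n:ℝ)| := abs_add_le _ _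
      _ ≤ |X n a - c| + |c / (n:ℝ)| := by linarith
      _ ≤ ε / 2 + ε / 2 := add_le_add hx hy
      _ = ε := by ring

lemma tpc_sum {ι : Type*} (s : Finset ι) (X : ι → ∀ n, Ω n → ℝ) (c : ι → ℝ)
    (h : ∀ i ∈ s, TPc P (X i) (c i)) :
    TPc P (fun n a => ∑ i ∈ s, X i n a) (∑ i ∈ s, c i) := by
  induction s using Finset.cons_induction with
  | empty => simpa using tpc_const (P := P) (0:ℝ)
  | cons i s hi ih =>
    simp only [Finset.sum_cons]
    exact tpc_add (h i (Finset.mem_cons_self i s)) (ih fun j hj => h j (Finset.mem_cons_of_mem hj))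

end Aux

/-- Corollary 1: if the first posterior mean is consistent for `θ₀`, the second is
consistent for a pseudo-true `θ*` with `(θ* - θ₀)ᵀH₀(θ* - θ₀) > 0`, the rescaled posterior
covariance estimates `n·Σ̄ⱼₙ` converge in probability to fixed matrices and `H̄ₙ → H₀` in
probability, then the location-adjusted pooling weight
`ω̃ₙ = tr(H̄ₙΣ̄₁ₙ)/((θ̄₁ₙ-θ̄₂ₙ)ᵀH̄ₙ(θ̄₁ₙ-θ̄₂ₙ) + tr(H̄ₙΣ̄₁ₙ) + tr(H̄ₙΣ̄₂ₙ))` converges to `0`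
in probability. -/
theorem location_adjusted_pooling_weight_tendsto_zero
    (d : ℕ) (Ω : ℕ → Type*) [∀ n, MeasurableSpace (Ω n)]
    (P : ∀ n, Measure (Ω n)) [∀ n, IsProbabilityMeasure (P n)]
    (θbar₁ θbar₂ : ∀ n, Ω n → Fin d → ℝ)
    (Sbar₁ Sbar₂ Hbar : ∀ n, Ω n → Matrix (Fin d) (Fin d) ℝ)
    (ωtilde : ∀ n, Ω n → ℝ)
    (hωtilde : ∀ n a, ωtilde n a =
      (Hbar n a * Sbar₁ n a).trace /
        ((θbar₁ n a - θbar₂ n a) ⬝ᵥ Hbar n a *ᵥ (θbar₁ n a - θbar₂ n a) +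
          (Hbar n a * Sbar₁ n a).trace + (Hbar n a * Sbar₂ n a).trace))
    (θ₀ θstar : Fin d → ℝ)
    (hθ₁ : ∀ ε : ℝ, 0 < ε →
      Tendsto (fun n => P n {a | ε < ‖θbar₁ n a - θ₀‖}) atTop (nhds 0))
    (hθ₂ : ∀ ε : ℝ, 0 < ε →
      Tendsto (fun n => P n {a | ε < ‖θbar₂ n a - θstar‖}) atTop (nhds 0))
    (Sig₁ Sig₂ : Matrix (Fin d) (Fin d) ℝ)
    (hSig₁ : ∀ i j, ∀ ε : ℝ, 0 < ε →
      Tendsto (fun n => P n {a | ε < |(n : ℝ) * Sbar₁ n a i j - Sig₁ i j|}) atTop (nhds 0))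
    (hSig₂ : ∀ i j, ∀ ε : ℝ, 0 < ε →
      Tendsto (fun n => P n {a | ε < |(n : ℝ) * Sbar₂ n a i j - Sig₂ i j|}) atTop (nhds 0))
    (H₀ : Matrix (Fin d) (Fin d) ℝ) (hH₀sym : H₀.IsSymm)
    (hH : ∀ i j, ∀ ε : ℝ, 0 < ε →
      Tendsto (fun n => P n {a | ε < |Hbar n a i j - H₀ i j|}) atTop (nhds 0))
    (hsep : 0 < (θstar - θ₀) ⬝ᵥ H₀ *ᵥ (θstar - θ₀)) :
    ∀ ε : ℝ, 0 < ε →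
      Tendsto (fun n => P n {a | ε < |ωtilde n a|}) atTop (nhds 0) := by
  -- convergence in probability of components of the posterior means
  have hθ₁c : ∀ i, TPc P (fun n a => θbar₁ n a i) (θ₀ i) := by
    intro i ε hε
    have hsub : ∀ n, {a | ε < |θbar₁ n a i - θ₀ i|} ⊆ {a | ε < ‖θbar₁ n a - θ₀‖} := by
      intro n a ha
      simp only [Set.mem_setOf_eq] at ha ⊢
      calc ε < |θbar₁ n a i - θ₀ i| := ha
        _ = ‖(θbar₁ n a - θ₀) i‖ := by simp [Real.norm_eq_abs]
        _ ≤ ‖θbar₁ n a - θ₀‖ := norm_le_pi_norm _ i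
    exact tendsto_of_tendsto_of_tendsto_of_le_of_le tendsto_const_nhds (hθ₁ ε hε)
      (fun n => zero_le) (fun n => measure_mono (hsub n))
  have hθ₂c : ∀ i, TPc P (fun n a => θbar₂ n a i) (θstar i) := by
    intro i ε hε
    have hsub : ∀ n, {a | ε < |θbar₂ n a i - θstar i|} ⊆ {a | ε < ‖θbar₂ n a - θstar‖} := by
      intro n a ha
      simp only [Set.mem_setOf_eq] at ha ⊢
      calc ε < |θbar₂ n a i - θstar i| := ha
        _ = ‖(θbar₂ n a - θstar) i‖ := by simp [Real.norm_eq_abs]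
        _ ≤ ‖θbar₂ n a - θstar‖ := norm_le_pi_norm _ i
    exact tendsto_of_tendsto_of_tendsto_of_le_of_le tendsto_const_nhds (hθ₂ ε hε)
      (fun n => zero_le) (fun n => measure_mono (hsub n))
  have hHc : ∀ i j, TPc P (fun n a => Hbar n a i j) (H₀ i j) := fun i j => hH i j
  -- the covariance entries themselves tend to 0 in probability
  have hS₁c : ∀ i j, TPc P (fun n a => Sbar₁ n a i j) 0 := by
    intro i j
    have h1 : TPc P (fun n a => (n : ℝ) * Sbar₁ n a i j) (Sig₁ i j) := hSig₁ i j
    refine tpc_congr' ?_ (tpc_div_nat h1)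
    filter_upwards [eventually_ge_atTop 1] with n hn a
    have hn0 : ((n : ℝ)) ≠ 0 := by
      have : (1:ℝ) ≤ (n:ℝ) := by exact_mod_cast hn
      linarith
    exact mul_div_cancel_left₀ _ hn0
  have hS₂c : ∀ i j, TPc P (fun n a => Sbar₂ n a i j) 0 := by
    intro i j
    have h1 : TPc P (fun n a => (n : ℝ) * Sbar₂ n a i j) (Sig₂ i j) := hSig₂ i j
    refine tpc_congr' ?_ (tpc_div_nat h1)
    filter_upwards [eventually_ge_atTop 1] with n hn a
    have hn0 : ((n : ℝ)) ≠ 0 := by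
      have : (1:ℝ) ≤ (n:ℝ) := by exact_mod_cast hn
      linarith
    exact mul_div_cancel_left₀ _ hn0
  -- components of the difference of posterior means
  have hwc : ∀ i, TPc P (fun n a => (θbar₁ n a - θbar₂ n a) i) (θ₀ i - θstar i) := by
    intro i
    have h := tpc_add (hθ₁c i) (tpc_neg (hθ₂c i))
    refine tpc_of_eq (tpc_congr (fun n a => ?_) h) (by ring)
    simp [sub_eq_add_neg]
  -- the two trace terms tend to 0 in probability
  have hT₁ : TPc P (fun n a => (Hbar n a * Sbar₁ n a).trace) 0 := by
    have h : TPc P (fun n a => ∑ i : Fin d, ∑ j : Fin d, Hbar n a i j * Sbar₁ n a j i)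
        (∑ i : Fin d, ∑ j : Fin d, H₀ i j * (0:ℝ)) :=
      tpc_sum _ _ _ (fun i _ => tpc_sum _ _ _ (fun j _ => tpc_mul (hHc i j) (hS₁c j i)))
    refine tpc_of_eq (tpc_congr (fun n a => ?_) h) (by simp)
    simp [Matrix.trace, Matrix.diag, Matrix.mul_apply]
  have hT₂ : TPc P (fun n a => (Hbar n a * Sbar₂ n a).trace) 0 := by
    have h : TPc P (fun n a => ∑ i : Fin d, ∑ j : Fin d, Hbar n a i j * Sbar₂ n a j i)
        (∑ i : Fin d, ∑ j : Fin d, H₀ i j * (0:ℝ)) :=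
      tpc_sum _ _ _ (fun i _ => tpc_sum _ _ _ (fun j _ => tpc_mul (hHc i j) (hS₂c j i)))
    refine tpc_of_eq (tpc_congr (fun n a => ?_) h) (by simp)
    simp [Matrix.trace, Matrix.diag, Matrix.mul_apply]
  -- the limiting quadratic form is positive
  set q₀ : ℝ := (θ₀ - θstar) ⬝ᵥ H₀ *ᵥ (θ₀ - θstar) with hq₀def
  have hq₀pos : 0 < q₀ := by
    have hneg : θ₀ - θstar = -(θstar - θ₀) := by rw [neg_sub]
    rw [hq₀def, hneg, Matrix.mulVec_neg, dotProduct_neg, neg_dotProduct, neg_neg]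
    exact hsep
  -- the quadratic form converges in probability to q₀
  have hQ : TPc P
      (fun n a => (θbar₁ n a - θbar₂ n a) ⬝ᵥ Hbar n a *ᵥ (θbar₁ n a - θbar₂ n a)) q₀ := by
    have h : TPc P
        (fun n a => ∑ i : Fin d, (θbar₁ n a - θbar₂ n a) i *
          ∑ j : Fin d, Hbar n a i j * (θbar₁ n a - θbar₂ n a) j)
        (∑ i : Fin d, (θ₀ i - θstar i) * ∑ j : Fin d, H₀ i j * (θ₀ j - θstar j)) :=
      tpc_sum _ _ _ (fun i _ =>
        tpc_mul (hwc i) (tpc_sum _ _ _ (fun j _ => tpc_mul (hHc i j) (hwc j))))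
    refine tpc_of_eq (tpc_congr (fun n a => ?_) h) ?_
    · simp [dotProduct, Matrix.mulVec]
    · simp [hq₀def, dotProduct, Matrix.mulVec]
  -- the denominator converges in probability to q₀
  have hDen : TPc P (fun n a =>
      (θbar₁ n a - θbar₂ n a) ⬝ᵥ Hbar n a *ᵥ (θbar₁ n a - θbar₂ n a) +
        (Hbar n a * Sbar₁ n a).trace + (Hbar n a * Sbar₂ n a).trace) q₀ :=
    tpc_of_eq (tpc_add (tpc_add hQ hT₁) hT₂) (by ring)
  -- conclude
  have hfinal : TPc P ωtilde 0 := by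
    have hdiv := tpc_div0 hq₀pos hT₁ hDen
    exact tpc_congr (fun n a => (hωtilde n a).symm) hdiv
  intro ε hε
  have := hfinal ε hε
  simpa using this
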